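/- Let m ≥ 1 be a positive integer, p a positive integer coprime to 4m+2, γ, λ, δ real numbers. Define t_j = 1 + γ + iλ cos(2π p j/(4m+2) + δ) for j = 1,…,4m+2. Then |t_1 t_3 ⋯ t_{4m+1}| = |t_2 t_4 ⋯ t_{4m+2}|, i.e., the product of |t_j| over odd j equals the product over even j. -/

import Mathlib

open Real Complex Finset

lemma abs_helper (a b : ℝ) :
    ‖(a : ℂ) + Complex.I * b‖ = Real.sqrt (a ^ 2 + b ^ 2) := by
  have : (a : ℂ) + Complex.I * b = (a : ℂ) + (b : ℂ) * Complex.I := by ring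
  rw [this, Complex.norm_add_mul_I]

lemma cos_sq_add_nat_pi (θ : ℝ) (p : ℕ) :
    Real.cos (θ + p * π) ^ 2 = Real.cos θ ^ 2 := by
  have h1 : Real.sin ((p : ℝ) * π) = 0 := Real.sin_nat_mul_pi p
  have h2 : Real.cos ((p : ℝ) * π) ^ 2 = 1 := by
    have := Real.sin_sq_add_cos_sq ((p : ℝ) * π)
    nlinarith
  rw [Real.cos_add, h1]
  nlinarith

/-- For `q = 4m+2` and `t j = 1 + γ + iλ cos(2π p j / (4m+2) + δ)`, the product of
`|t j|` over odd `j = 1,3,…,4m+1` equals the product over even `j = 2,4,…,4m+2`. -/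
theorem abs_prod_odd_eq_abs_prod_even_q_4m_plus_2 (m p : ℕ) (hm : 1 ≤ m) (hp : 0 < p)
    (hcop : Nat.Coprime p (4 * m + 2)) (γ lam δ : ℝ)
    (t : ℕ → ℂ)
    (ht : ∀ j : ℕ, t j =
      (1 + γ : ℂ) + Complex.I * lam * Real.cos (2 * π * p * j / (4 * m + 2) + δ)) :
    ∏ j ∈ Finset.range (2 * m + 1), ‖t (2 * j + 1)‖ =
    ∏ j ∈ Finset.range (2 * m + 1), ‖t (2 * j + 2)‖ := by
  have hq : ((4 : ℝ) * m + 2) ≠ 0 := by positivity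
  -- key periodicity: shifting index by 2m+1 preserves the absolute value
  have key : ∀ n : ℕ, ‖t (n + (2 * m + 1))‖ = ‖t n‖ := by
    intro n
    rw [ht, ht]
    have hI : ∀ c : ℝ, (1 + γ : ℂ) + Complex.I * lam * c = ((1 + γ : ℝ) : ℂ) + Complex.I * ((lam * c : ℝ) : ℂ) := by
      intro c; push_cast; ring
    rw [hI, hI, abs_helper, abs_helper]
    have hθ : 2 * π * p * (↑(n + (2 * m + 1)) : ℝ) / (4 * m + 2) + δ
        = (2 * π * p * n / (4 * m + 2) + δ) + p * π := by
      push_cast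
      field_simp
      ring
    rw [hθ]
    have hc : (lam * Real.cos (2 * π * p * n / (4 * ↑m + 2) + δ + p * π)) ^ 2
        = (lam * Real.cos (2 * π * p * n / (4 * ↑m + 2) + δ)) ^ 2 := by
      have := cos_sq_add_nat_pi (2 * π * p * n / (4 * (m:ℝ) + 2) + δ) p
      rw [mul_pow, mul_pow, this]
    rw [hc]
  -- the even-index factors, as a function of the summation index
  set G : ℕ → ℝ := fun k => ‖t (2 * k + 2)‖ with hG
  have hGper : ∀ k, G (k + (2 * m + 1)) = G k := by
    intro k
    simp only [hG]
    have : 2 * (k + (2 * m + 1)) + 2 = (2 * k + 2) + (2 * m + 1) + (2 * m + 1) := by ring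
    rw [this, key, key]
  have hGmod : ∀ a, G (a % (2 * m + 1)) = G a := by
    intro a
    have hper : Function.Periodic G (2 * m + 1) := hGper
    exact hper.map_mod_nat a
  refine Finset.prod_nbij' (fun i => (i + m) % (2 * m + 1))
      (fun i => (i + (m + 1)) % (2 * m + 1)) ?_ ?_ ?_ ?_ ?_
  · intro a _; exact Finset.mem_range.mpr (Nat.mod_lt _ (by omega))
  · intro a _; exact Finset.mem_range.mpr (Nat.mod_lt _ (by omega))
  · intro a ha
    rw [Nat.mod_add_mod]
    have : a + m + (m + 1) = a + (2 * m + 1) := by ring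
    rw [this, Nat.add_mod_right]
    exact Nat.mod_eq_of_lt (Finset.mem_range.mp ha)
  · intro a ha
    rw [Nat.mod_add_mod]
    have : a + (m + 1) + m = a + (2 * m + 1) := by ring
    rw [this, Nat.add_mod_right]
    exact Nat.mod_eq_of_lt (Finset.mem_range.mp ha)
  · intro a _
    show ‖t (2 * a + 1)‖ = G ((a + m) % (2 * m + 1))
    rw [hGmod]
    simp only [hG]
    have : 2 * (a + m) + 2 = (2 * a + 1) + (2 * m + 1) := by ring
    rw [this, key]
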